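/- For every R > 0, the exit-time density of the 3-ball integrates to one: ∫_0^∞ f₃^exit(t) dt = 1, i.e., f₃^exit is a probability density function on (0, ∞). -/

import Mathlib

open Real Filter Topology MeasureTheory Set

set_option maxHeartbeats 1000000

/-- Exit-time density of a standard 3-dimensional Brownian motion started at the
center of the ball of radius `R` and killed at its boundary. -/
noncomputable def f₃exit (R t : ℝ) : ℝ :=
  (π ^ 2 / R ^ 2) * ∑' k : ℕ, (-1 : ℝ) ^ k * ((k : ℝ) + 1) ^ 2 *
    Real.exp (-(((k : ℝ) + 1) ^ 2 * π ^ 2 * t) / (2 * R ^ 2))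

namespace F3exitAux


/-- generic geometric-domination summability -/
lemma summable_exp_of_le {s : ℝ} (hs : 0 < s) {g : ℕ → ℝ} (hg : ∀ n : ℕ, (n : ℝ) ≤ g n) :
    Summable fun n : ℕ => Real.exp (-(s * g n)) := by
  have hr0 : (0:ℝ) ≤ Real.exp (-s) := (Real.exp_pos _).le
  have hr : Real.exp (-s) < 1 := by
    rw [← Real.exp_zero]; exact Real.exp_lt_exp.mpr (by linarith)
  refine Summable.of_nonneg_of_le (fun n => (Real.exp_pos _).le) (fun n => ?_)
    (summable_geometric_of_lt_one hr0 hr)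
  rw [← Real.exp_nat_mul]
  apply Real.exp_le_exp.mpr
  have h1 := mul_le_mul_of_nonneg_left (hg n) hs.le
  nlinarith

lemma nat_le_sq (n : ℕ) : (n : ℝ) ≤ (n : ℝ) ^ 2 := by
  have := Nat.le_self_pow two_ne_zero n
  exact_mod_cast this

lemma nat_le_sq1 (n : ℕ) : (n : ℝ) ≤ ((n : ℝ) + 1) ^ 2 := by
  nlinarith [Nat.cast_nonneg (α := ℝ) n]

lemma nat_le_sqodd (n : ℕ) : (n : ℝ) ≤ (2 * (n : ℝ) + 1) ^ 2 := by
  nlinarith [Nat.cast_nonneg (α := ℝ) n]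

noncomputable def θs (s : ℝ) : ℝ := ∑' k : ℕ, (-1 : ℝ) ^ k * Real.exp (-(s * ((k:ℝ)+1)^2))
noncomputable def Pz (s : ℝ) : ℝ := ∑' n : ℤ, Real.exp (-(s * (n:ℝ)^2))
noncomputable def Hs (v : ℝ) : ℝ := ∑' k : ℕ, Real.exp (-(v * (2*(k:ℝ)+1)^2))

lemma S_theta {s : ℝ} (hs : 0 < s) :
    Summable fun k : ℕ => Real.exp (-(s * ((k:ℝ)+1)^2)) :=
  summable_exp_of_le hs nat_le_sq1

lemma S_theta_signed {s : ℝ} (hs : 0 < s) :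
    Summable fun k : ℕ => (-1:ℝ)^k * Real.exp (-(s * ((k:ℝ)+1)^2)) := by
  apply Summable.of_abs
  refine (S_theta hs).congr fun k => ?_
  simp [abs_mul, abs_of_nonneg (Real.exp_pos _).le]

lemma S_P_nat {s : ℝ} (hs : 0 < s) :
    Summable fun n : ℕ => Real.exp (-(s * (n:ℝ)^2)) :=
  summable_exp_of_le hs nat_le_sq

lemma S_P_negnat {s : ℝ} (hs : 0 < s) :
    Summable fun n : ℕ => Real.exp (-(s * ((-((n:ℤ)+1) : ℤ) : ℝ)^2)) := by
  refine (S_theta hs).congr fun n => ?_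
  push_cast
  ring_nf

lemma S_Pz {s : ℝ} (hs : 0 < s) :
    Summable fun n : ℤ => Real.exp (-(s * (n:ℝ)^2)) :=
  Summable.of_nat_of_neg_add_one (S_P_nat hs) (S_P_negnat hs)

lemma S_H {v : ℝ} (hv : 0 < v) :
    Summable fun k : ℕ => Real.exp (-(v * (2*(k:ℝ)+1)^2)) :=
  summable_exp_of_le hv nat_le_sqodd

lemma S_sq {s : ℝ} (hs : 0 < s) :
    Summable fun k : ℕ => ((k:ℝ)+1)^2 * Real.exp (-(s * ((k:ℝ)+1)^2)) := by
  have hr0 : (0:ℝ) ≤ Real.exp (-s) := (Real.exp_pos _).le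
  have hr : Real.exp (-s) < 1 := by
    rw [← Real.exp_zero]; exact Real.exp_lt_exp.mpr (by linarith)
  have hgeo : Summable fun n : ℕ => (n:ℝ)^2 * Real.exp (-s) ^ n := by
    have := summable_pow_mul_geometric_of_norm_lt_one (R := ℝ) 2
      (r := Real.exp (-s)) (by rwa [Real.norm_eq_abs, abs_of_nonneg hr0])
    exact this
  have hgeo' : Summable fun n : ℕ => ((n:ℝ)+1)^2 * Real.exp (-s) ^ (n+1) := by
    have := hgeo.comp_injective (add_left_injective 1)
    refine this.congr fun n => ?_
    simp only [Function.comp]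
    push_cast
    ring_nf
  refine Summable.of_nonneg_of_le (fun n => by positivity) (fun n => ?_) hgeo'
  have h1 : Real.exp (-(s * ((n:ℝ)+1)^2)) ≤ Real.exp (-s) ^ (n+1) := by
    rw [← Real.exp_nat_mul]
    apply Real.exp_le_exp.mpr
    have hn1 : ((n:ℝ)+1) ≤ ((n:ℝ)+1)^2 := by nlinarith [Nat.cast_nonneg (α := ℝ) n]
    have := mul_le_mul_of_nonneg_left hn1 hs.le
    push_cast
    nlinarith
  have h2 : (0:ℝ) ≤ ((n:ℝ)+1)^2 := by positivity
  exact mul_le_mul_of_nonneg_left h1 h2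


lemma two_mul_inj : Function.Injective fun m : ℤ => 2 * m :=
  fun a b h => by dsimp at h; omega

lemma two_mul_add_one_inj : Function.Injective fun m : ℤ => 2 * m + 1 :=
  fun a b h => by dsimp at h; omega

lemma even_part {s : ℝ} (hs : 0 < s) :
    ∑' n : ℤ, (if Even n then Real.exp (-(s * (n:ℝ)^2)) else 0) = Pz (4*s) := by
  rw [← Function.Injective.tsum_eq two_mul_inj (f := fun n : ℤ =>
      (if Even n then Real.exp (-(s * (n:ℝ)^2)) else 0)) ?_]
  · refine tsum_congr fun m => ?_
    rw [if_pos ⟨m, two_mul m⟩]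
    push_cast
    ring_nf
  · intro x hx
    rcases Int.even_or_odd x with ⟨r, hr⟩ | hodd
    · exact ⟨r, by dsimp; omega⟩
    · exact absurd (if_neg (Int.not_even_iff_odd.mpr hodd)) hx

lemma int_odd_sum {s : ℝ} (hs : 0 < s) :
    ∑' m : ℤ, Real.exp (-(s * (2*(m:ℝ)+1)^2)) = 2 * Hs s := by
  set f : ℤ → ℝ := fun m => Real.exp (-(s * (2*(m:ℝ)+1)^2)) with hf
  have key1 : ∀ n : ℕ, f ((n : ℤ)) = Real.exp (-(s * (2*(n:ℝ)+1)^2)) := by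
    intro n; simp only [hf]; norm_num
  have key2 : ∀ n : ℕ, f (-((n:ℤ)+1)) = Real.exp (-(s * (2*(n:ℝ)+1)^2)) := by
    intro n; simp only [hf]; congr 1; push_cast; ring
  have h1 : Summable fun n : ℕ => f ((n : ℤ)) := (S_H hs).congr fun n => (key1 n).symm
  have h2 : Summable fun n : ℕ => f (-((n:ℤ)+1)) := (S_H hs).congr fun n => (key2 n).symm
  rw [tsum_of_nat_of_neg_add_one (f := f) h1 h2]
  have eA : ∑' n : ℕ, f ((n : ℤ)) = Hs s := tsum_congr key1
  have eB : ∑' n : ℕ, f (-((n:ℤ)+1)) = Hs s := tsum_congr key2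
  rw [eA, eB]; ring

lemma odd_part {s : ℝ} (hs : 0 < s) :
    ∑' n : ℤ, (if Even n then 0 else Real.exp (-(s * (n:ℝ)^2))) = 2 * Hs s := by
  rw [← Function.Injective.tsum_eq two_mul_add_one_inj (f := fun n : ℤ =>
      (if Even n then 0 else Real.exp (-(s * (n:ℝ)^2)))) ?_]
  · have h1 : ∀ m : ℤ, (if Even (2*m+1) then (0:ℝ) else Real.exp (-(s * ((2*m+1 : ℤ):ℝ)^2)))
        = Real.exp (-(s * (2*(m:ℝ)+1)^2)) := by
      intro m
      rw [if_neg (by simp [Int.even_add_one, parity_simps])]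
      push_cast
      ring_nf
    calc ∑' m : ℤ, (if Even (2*m+1) then (0:ℝ) else Real.exp (-(s * ((2*m+1 : ℤ):ℝ)^2)))
        = ∑' m : ℤ, Real.exp (-(s * (2*(m:ℝ)+1)^2)) := tsum_congr h1
      _ = 2 * Hs s := int_odd_sum hs
  · intro x hx
    by_cases h : Even x
    · exact absurd (if_pos h) hx
    · obtain ⟨r, hr⟩ := Int.not_even_iff_odd.mp h
      exact ⟨r, by dsimp; omega⟩

lemma Pz_split {s : ℝ} (hs : 0 < s) : Pz s = Pz (4*s) + 2 * Hs s := by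
  rw [← even_part hs, ← odd_part hs, Pz, ← Summable.tsum_add]
  · exact tsum_congr fun n => by by_cases h : Even n <;> simp [h]
  · refine Summable.of_nonneg_of_le (fun n => ?_) (fun n => ?_) (S_Pz hs)
    · positivity
    · by_cases h : Even n <;> simp [h, (Real.exp_pos _).le]
  · refine Summable.of_nonneg_of_le (fun n => ?_) (fun n => ?_) (S_Pz hs)
    · positivity
    · by_cases h : Even n <;> simp [h, (Real.exp_pos _).le]

lemma Tz_eq {s : ℝ} (hs : 0 < s) :
    ∑' n : ℤ, (-1:ℝ)^n * Real.exp (-(s * (n:ℝ)^2)) = 2 * Pz (4*s) - Pz s := by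
  have hpt : ∀ n : ℤ, (-1:ℝ)^n * Real.exp (-(s * (n:ℝ)^2))
      = 2 * (if Even n then Real.exp (-(s * (n:ℝ)^2)) else 0) - Real.exp (-(s * (n:ℝ)^2)) := by
    intro n
    by_cases h : Even n
    · rw [h.neg_one_zpow, if_pos h]; ring
    · rw [(Int.not_even_iff_odd.mp h).neg_one_zpow, if_neg h]; ring
  have hsum_ite : Summable fun n : ℤ => (if Even n then Real.exp (-(s * (n:ℝ)^2)) else 0) := by
    refine Summable.of_nonneg_of_le (fun n => ?_) (fun n => ?_) (S_Pz hs)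
    · positivity
    · by_cases h : Even n <;> simp [h, (Real.exp_pos _).le]
  calc ∑' n : ℤ, (-1:ℝ)^n * Real.exp (-(s * (n:ℝ)^2))
      = ∑' n : ℤ, (2 * (if Even n then Real.exp (-(s * (n:ℝ)^2)) else 0)
          - Real.exp (-(s * (n:ℝ)^2))) := tsum_congr hpt
    _ = 2 * Pz (4*s) - Pz s := by
        rw [Summable.tsum_sub ((hsum_ite.mul_left 2)) (S_Pz hs), tsum_mul_left, even_part hs]
        rfl

lemma Tz_eq_theta {s : ℝ} (hs : 0 < s) :
    ∑' n : ℤ, (-1:ℝ)^n * Real.exp (-(s * (n:ℝ)^2)) = 1 - 2 * θs s := by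
  set f : ℤ → ℝ := fun n => (-1:ℝ)^n * Real.exp (-(s * (n:ℝ)^2)) with hf
  set g : ℕ → ℝ := fun n => (-1:ℝ)^n * Real.exp (-(s * (n:ℝ)^2)) with hg
  have key1 : ∀ n : ℕ, f ((n : ℤ)) = g n := by
    intro n
    simp only [hf, hg, zpow_natCast]
    norm_num
  have key2 : ∀ n : ℕ, f (-((n:ℤ)+1)) = -((-1:ℝ)^n * Real.exp (-(s * ((n:ℝ)+1)^2))) := by
    intro n
    simp only [hf]
    have hz : (-1:ℝ)^(-((n:ℤ)+1)) = -(-1:ℝ)^n := by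
      rw [zpow_neg]
      have : ((-1:ℝ))^((n:ℤ)+1) = -(-1:ℝ)^n := by
        rw [zpow_add_one₀ (by norm_num : (-1:ℝ) ≠ 0), zpow_natCast]; ring
      rw [this]
      rcases Nat.even_or_odd n with h | h
      · rw [h.neg_one_pow]; norm_num
      · rw [h.neg_one_pow]; norm_num
    have he : Real.exp (-(s * ((-((n:ℤ)+1) : ℤ):ℝ)^2)) = Real.exp (-(s * ((n:ℝ)+1)^2)) := by
      congr 1; push_cast; ring
    rw [hz, he]; ring
  have hgsucc : ∀ n : ℕ, g (n+1) = -((-1:ℝ)^n * Real.exp (-(s * ((n:ℝ)+1)^2))) := by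
    intro n
    simp only [hg, pow_succ]
    push_cast
    ring
  have hsumtail : Summable fun n : ℕ => g (n+1) := by
    refine (S_theta_signed hs).neg.congr fun n => ?_
    rw [hgsucc n]
  have h1 : Summable fun n : ℕ => f ((n : ℤ)) := by
    refine Summable.congr ?_ fun n => (key1 n).symm
    apply Summable.of_abs
    refine (S_P_nat hs).congr fun n => ?_
    simp only [hg, abs_mul, abs_pow, abs_neg, abs_one, one_pow, one_mul,
      abs_of_nonneg (Real.exp_pos _).le]
  have h2 : Summable fun n : ℕ => f (-((n:ℤ)+1)) :=
    ((S_theta_signed hs).neg).congr fun n => (key2 n).symm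
  rw [tsum_of_nat_of_neg_add_one (f := f) h1 h2]
  have hB : ∑' n : ℕ, f (-((n:ℤ)+1)) = -θs s := by
    rw [θs, ← tsum_neg]
    exact tsum_congr key2
  have hA : ∑' n : ℕ, f ((n : ℤ)) = 1 - θs s := by
    rw [tsum_congr key1, tsum_eq_zero_add' hsumtail]
    have e0 : g 0 = 1 := by simp [hg]
    have etail : ∑' n : ℕ, g (n+1) = -θs s := by
      rw [θs, ← tsum_neg]
      exact tsum_congr hgsucc
    rw [e0, etail]; ring
  rw [hA, hB]; ring


lemma Pz_poisson {s : ℝ} (hs : 0 < s) : Pz s = Real.sqrt (π / s) * Pz (π^2 / s) := by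
  have hsπ : 0 < s / π := div_pos hs pi_pos
  have h := Real.tsum_exp_neg_mul_int_sq hsπ
  have hπs : π * (s/π) = s := by field_simp
  have hL : ∀ n : ℤ, Real.exp (-π * (s/π) * (n:ℝ)^2) = Real.exp (-(s * (n:ℝ)^2)) := by
    intro n
    congr 1
    rw [neg_mul, neg_mul, hπs]
  have hR : ∀ n : ℤ, Real.exp (-π / (s/π) * (n:ℝ)^2) = Real.exp (-(π^2/s * (n:ℝ)^2)) := by
    intro n
    congr 1
    rw [div_div_eq_mul_div]
    ring
  rw [tsum_congr hL, tsum_congr hR] at h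
  rw [Pz, Pz, h]
  congr 1
  rw [← Real.sqrt_eq_rpow, one_div, ← Real.sqrt_inv]
  congr 1
  rw [inv_div]

lemma key_identity {s : ℝ} (hs : 0 < s) :
    2 * θs s = 1 - 2 * Real.sqrt (π / s) * Hs (π^2 / (4*s)) := by
  have h4 : (0:ℝ) < 4 * s := by linarith
  have hq : 0 < π^2 / (4*s) := div_pos (by positivity) h4
  have e1 : 1 - 2 * θs s = 2 * Pz (4*s) - Pz s := by
    rw [← Tz_eq_theta hs, Tz_eq hs]
  have e2 : Pz (4*s) = Real.sqrt (π / (4*s)) * Pz (π^2 / (4*s)) := Pz_poisson h4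
  have e3 : Pz s = Real.sqrt (π / s) * Pz (π^2 / s) := Pz_poisson hs
  have e4 : Pz (π^2 / (4*s)) = Pz (π^2 / s) + 2 * Hs (π^2 / (4*s)) := by
    have := Pz_split hq
    rw [show 4 * (π^2 / (4*s)) = π^2 / s by field_simp] at this
    exact this
  have e5 : Real.sqrt (π / (4*s)) = Real.sqrt (π / s) / 2 := by
    rw [show π / (4*s) = (π / s) / 4 by rw [div_div]; ring_nf,
      Real.sqrt_div (by positivity) 4,
      show Real.sqrt 4 = 2 by rw [show (4:ℝ) = 2^2 by norm_num, Real.sqrt_sq (by norm_num : (0:ℝ) ≤ 2)]]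
  have : 1 - 2 * θs s = 2 * Real.sqrt (π / s) * Hs (π^2 / (4*s)) := by
    rw [e1, e2, e3, e4, e5]
    ring
  linarith


lemma two_mul_nat_inj : Function.Injective fun k : ℕ => 2 * k := fun a b h => by dsimp at h; omega
lemma two_mul_add_one_nat_inj : Function.Injective fun k : ℕ => 2 * k + 1 := fun a b h => by dsimp at h; omega

lemma alt_nonneg {b : ℕ → ℝ} (hb : Summable b) (hpos : ∀ k, 0 ≤ b k)
    (hdec : ∀ k, b (k+1) ≤ b k) : 0 ≤ ∑' k, (-1:ℝ)^k * b k := by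
  have hsigned : Summable fun k => (-1:ℝ)^k * b k := by
    apply Summable.of_abs
    refine hb.congr fun k => ?_
    simp [abs_mul, abs_of_nonneg (hpos k)]
  have he : Summable fun k : ℕ => (-1:ℝ)^(2*k) * b (2*k) :=
    hsigned.comp_injective two_mul_nat_inj
  have ho : Summable fun k : ℕ => (-1:ℝ)^(2*k+1) * b (2*k+1) :=
    hsigned.comp_injective two_mul_add_one_nat_inj
  rw [← tsum_even_add_odd (f := fun k => (-1:ℝ)^k * b k) he ho]
  have e1 : ∀ k : ℕ, (-1:ℝ)^(2*k) * b (2*k) = b (2*k) := by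
    intro k; rw [pow_mul]; norm_num
  have e2 : ∀ k : ℕ, (-1:ℝ)^(2*k+1) * b (2*k+1) = -(b (2*k+1)) := by
    intro k; rw [pow_succ, pow_mul]; norm_num
  rw [tsum_congr e1, tsum_congr e2, tsum_neg, ← sub_eq_add_neg, sub_nonneg]
  refine Summable.tsum_le_tsum (fun k => ?_) (((ho.congr e2).neg).congr fun k => by simp) (he.congr e1)
  exact hdec (2*k)

lemma alt_le_first {b : ℕ → ℝ} (hb : Summable b) (hpos : ∀ k, 0 ≤ b k)
    (hdec : ∀ k, b (k+1) ≤ b k) : ∑' k, (-1:ℝ)^k * b k ≤ b 0 := by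
  have hbs : Summable fun k => b (k+1) := hb.comp_injective (add_left_injective 1)
  have htail0 : 0 ≤ ∑' k, (-1:ℝ)^k * b (k+1) :=
    alt_nonneg hbs (fun k => hpos _) (fun k => hdec _)
  have hsignedtail : Summable fun k => (-1:ℝ)^(k+1) * b (k+1) := by
    apply Summable.of_abs
    refine hbs.congr fun k => ?_
    simp [abs_mul, abs_of_nonneg (hpos _)]
  rw [tsum_eq_zero_add' (f := fun k => (-1:ℝ)^k * b k) hsignedtail]
  have e : ∑' k, (-1:ℝ)^(k+1) * b (k+1) = -∑' k, (-1:ℝ)^k * b (k+1) := by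
    rw [← tsum_neg]
    refine tsum_congr fun k => ?_
    rw [pow_succ]; ring
  rw [e]
  norm_num
  linarith

lemma sqrt_inv_exp_mono {B t₁ t₂ : ℝ} (h1 : 0 < t₁) (h12 : t₁ ≤ t₂) (h2 : t₂ ≤ 2*B) :
    Real.sqrt t₁⁻¹ * Real.exp (-(B/t₁)) ≤ Real.sqrt t₂⁻¹ * Real.exp (-(B/t₂)) := by
  have h2pos : 0 < t₂ := lt_of_lt_of_le h1 h12
  have hB : 0 < B := by nlinarith
  have hexp : (t₂/t₁ - 1)/2 ≤ B/t₁ - B/t₂ := by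
    have e : t₂/t₁ - 1 = (t₂ - t₁)/t₁ := by field_simp
    rw [e, div_div, div_sub_div _ _ h1.ne' h2pos.ne', div_le_div_iff₀ (by positivity) (by positivity)]
    nlinarith [mul_le_mul_of_nonneg_left h2 (sub_nonneg.mpr h12), h1.le, h2pos.le]
  have key : Real.sqrt (t₂/t₁) ≤ Real.exp (B/t₁ - B/t₂) := by
    have hx : t₂/t₁ ≤ Real.exp (t₂/t₁ - 1) := by
      have := Real.add_one_le_exp (t₂/t₁ - 1); linarith
    have h5 : Real.sqrt (t₂/t₁) ≤ Real.sqrt (Real.exp (t₂/t₁ - 1)) := Real.sqrt_le_sqrt hx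
    have hse : Real.sqrt (Real.exp (t₂/t₁ - 1)) = Real.exp ((t₂/t₁ - 1)/2) := by
      rw [show Real.exp (t₂/t₁-1) = Real.exp ((t₂/t₁-1)/2) * Real.exp ((t₂/t₁-1)/2) by
        rw [← Real.exp_add]; ring_nf]
      exact Real.sqrt_mul_self (Real.exp_nonneg _)
    rw [hse] at h5
    exact h5.trans (Real.exp_le_exp.mpr hexp)
  have e1 : Real.sqrt t₁⁻¹ = Real.sqrt t₂⁻¹ * Real.sqrt (t₂/t₁) := by
    rw [← Real.sqrt_mul (by positivity)]
    congr 1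
    field_simp
  rw [e1, mul_assoc]
  refine mul_le_mul_of_nonneg_left ?_ (Real.sqrt_nonneg _)
  calc Real.sqrt (t₂/t₁) * Real.exp (-(B/t₁))
      ≤ Real.exp (B/t₁ - B/t₂) * Real.exp (-(B/t₁)) :=
        mul_le_mul_of_nonneg_right key (Real.exp_nonneg _)
    _ = Real.exp (-(B/t₂)) := by rw [← Real.exp_add]; ring_nf

lemma sq_term_dec {s : ℝ} (hs : 1 ≤ s) (k : ℕ) :
    ((k:ℝ)+1+1)^2 * Real.exp (-(s * ((k:ℝ)+1+1)^2)) ≤ ((k:ℝ)+1)^2 * Real.exp (-(s * ((k:ℝ)+1)^2)) := by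
  set A : ℝ := (k:ℝ)+1 with hA
  have hA1 : 1 ≤ A := by rw [hA]; linarith [Nat.cast_nonneg (α := ℝ) k]
  have hsplit : Real.exp (-(s * (A+1)^2)) = Real.exp (-(s * A^2)) * Real.exp (-(s*(2*A+1))) := by
    rw [← Real.exp_add]; congr 1; ring
  have h3 : (3:ℝ) ≤ s * (2*A+1) := by nlinarith
  have h4 : (4:ℝ) ≤ Real.exp (s*(2*A+1)) := by
    have := Real.add_one_le_exp (3:ℝ)
    have h5 : Real.exp 3 ≤ Real.exp (s*(2*A+1)) := Real.exp_le_exp.mpr h3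
    linarith
  have hD : Real.exp (-(s*(2*A+1))) ≤ 1/4 := by
    rw [Real.exp_neg]
    rw [inv_le_comm₀ (Real.exp_pos _) (by norm_num)]
    linarith
  have hDpos : 0 < Real.exp (-(s*(2*A+1))) := Real.exp_pos _
  have hEpos : 0 < Real.exp (-(s * A^2)) := Real.exp_pos _
  have hsq : (A+1)^2 ≤ 4*A^2 := by nlinarith
  rw [hsplit]
  calc (A+1)^2 * (Real.exp (-(s * A^2)) * Real.exp (-(s*(2*A+1))))
      ≤ 4*A^2 * (Real.exp (-(s * A^2)) * Real.exp (-(s*(2*A+1)))) := by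
        refine mul_le_mul_of_nonneg_right hsq (by positivity)
    _ = A^2 * Real.exp (-(s * A^2)) * (4 * Real.exp (-(s*(2*A+1)))) := by ring
    _ ≤ A^2 * Real.exp (-(s * A^2)) * 1 := by
        refine mul_le_mul_of_nonneg_left ?_ (by positivity)
        linarith
    _ = A^2 * Real.exp (-(s * A^2)) := by ring


noncomputable def Ht (c t : ℝ) : ℝ :=
  2 * Real.sqrt (π/c) * ∑' k : ℕ,
    (Real.sqrt t⁻¹ * Real.exp (-(π^2*(2*(k:ℝ)+1)^2/(4*c)) / t))

lemma Ht_zero (c : ℝ) : Ht c 0 = 0 := by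
  simp [Ht]

lemma S_Hterm {c t : ℝ} (hc : 0 < c) (ht : 0 < t) :
    Summable fun k : ℕ => Real.sqrt t⁻¹ * Real.exp (-(π^2*(2*(k:ℝ)+1)^2/(4*c)) / t) := by
  have hv : 0 < π^2/(4*(c*t)) := by positivity
  refine ((S_H hv).mul_left (Real.sqrt t⁻¹)).congr fun k => ?_
  congr 1
  rw [neg_div]
  congr 1
  field_simp

lemma Ht_eq {c t : ℝ} (hc : 0 < c) (ht : 0 < t) :
    Ht c t = 2 * Real.sqrt (π/(c*t)) * Hs (π^2/(4*(c*t))) := by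
  rw [Ht, Hs, tsum_mul_left]
  have hsq : Real.sqrt (π/(c*t)) = Real.sqrt (π/c) * Real.sqrt t⁻¹ := by
    rw [← Real.sqrt_mul (by positivity)]
    congr 1
    field_simp
  have hT : ∑' k : ℕ, Real.exp (-(π^2*(2*(k:ℝ)+1)^2/(4*c)) / t)
      = ∑' k : ℕ, Real.exp (-(π^2/(4*(c*t)) * (2*(k:ℝ)+1)^2)) := by
    refine tsum_congr fun k => ?_
    congr 1
    rw [neg_div]
    congr 1
    field_simp
  rw [hsq, hT]
  ring

lemma Ht_id {c t : ℝ} (hc : 0 < c) (ht : 0 < t) :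
    Ht c t = 1 - 2 * θs (c*t) := by
  have h := key_identity (s := c*t) (by positivity)
  rw [Ht_eq hc ht]
  linarith

lemma theta_nonneg {s : ℝ} (hs : 0 < s) : 0 ≤ θs s := by
  refine alt_nonneg (S_theta hs) (fun k => (Real.exp_pos _).le) (fun k => ?_)
  apply Real.exp_le_exp.mpr
  have : (0:ℝ) ≤ (k:ℝ) := Nat.cast_nonneg k
  push_cast
  nlinarith

lemma theta_le {s : ℝ} (hs : 0 < s) : θs s ≤ Real.exp (-s) := by
  have h := alt_le_first (S_theta hs) (fun k => (Real.exp_pos _).le) (fun k => ?_)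
  · rw [θs]
    convert h using 2
    norm_num
  · apply Real.exp_le_exp.mpr
    have : (0:ℝ) ≤ (k:ℝ) := Nat.cast_nonneg k
    push_cast
    nlinarith

lemma theta_hasDeriv {s₀ : ℝ} (hs : 0 < s₀) :
    HasDerivAt θs (∑' k : ℕ, ((-1:ℝ)^k * (Real.exp (-(s₀ * ((k:ℝ)+1)^2)) * (-(((k:ℝ)+1)^2))))) s₀ := by
  have h2 : 0 < s₀/2 := by linarith
  have hD : HasDerivAt (fun z => ∑' k : ℕ, (-1:ℝ)^k * Real.exp (-(z * ((k:ℝ)+1)^2)))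
      (∑' k : ℕ, ((-1:ℝ)^k * (Real.exp (-(s₀ * ((k:ℝ)+1)^2)) * (-(((k:ℝ)+1)^2))))) s₀ := by
    refine hasDerivAt_tsum_of_isPreconnected (u := fun k : ℕ => ((k:ℝ)+1)^2 * Real.exp (-(s₀/2 * ((k:ℝ)+1)^2)))
      (S_sq h2) isOpen_Ioi isPreconnected_Ioi
      (g := fun k z => (-1:ℝ)^k * Real.exp (-(z * ((k:ℝ)+1)^2)))
      (g' := fun k z => (-1:ℝ)^k * (Real.exp (-(z * ((k:ℝ)+1)^2)) * (-(((k:ℝ)+1)^2))))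
      (fun k y _ => ?_) (fun k y hy => ?_) (show s₀ ∈ Ioi (s₀/2) by simp [Set.mem_Ioi]; linarith)
      (S_theta_signed hs) (show s₀ ∈ Ioi (s₀/2) by simp [Set.mem_Ioi]; linarith)
    · have hlin : HasDerivAt (fun z : ℝ => -(z * ((k:ℝ)+1)^2)) (-(((k:ℝ)+1)^2)) y := by
        have h0 := ((hasDerivAt_id y).mul_const (((k:ℝ)+1)^2)).neg
        rw [one_mul] at h0
        exact h0
      exact (hlin.exp).const_mul _
    · have hy' : s₀/2 < y := hy
      rw [norm_mul, norm_mul]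
      have h1 : ‖(-1:ℝ)^k‖ = 1 := by
        rw [norm_pow]
        norm_num
      rw [h1, one_mul]
      have h2' : ‖Real.exp (-(y * ((k:ℝ)+1)^2))‖ ≤ Real.exp (-(s₀/2 * ((k:ℝ)+1)^2)) := by
        rw [Real.norm_eq_abs, abs_of_nonneg (Real.exp_pos _).le]
        apply Real.exp_le_exp.mpr
        have hk : (0:ℝ) < ((k:ℝ)+1)^2 := by positivity
        nlinarith
      have h3 : ‖-(((k:ℝ)+1)^2)‖ = ((k:ℝ)+1)^2 := by
        rw [norm_neg, Real.norm_eq_abs, abs_of_nonneg (by positivity)]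
      rw [h3, Real.norm_eq_abs, abs_of_nonneg (Real.exp_pos _).le]
      calc Real.exp (-(y * ((k:ℝ)+1)^2)) * ((k:ℝ)+1)^2
          ≤ Real.exp (-(s₀/2 * ((k:ℝ)+1)^2)) * ((k:ℝ)+1)^2 := by
            rw [Real.norm_eq_abs, abs_of_nonneg (Real.exp_pos _).le] at h2'
            exact mul_le_mul_of_nonneg_right h2' (by positivity)
        _ = ((k:ℝ)+1)^2 * Real.exp (-(s₀/2 * ((k:ℝ)+1)^2)) := by ring
  exact hD

lemma f_eq {R : ℝ} (hR : 0 < R) (t : ℝ) :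
    f₃exit R t = 2 * (π^2/(2*R^2)) *
      ∑' k : ℕ, ((-1:ℝ)^k * (((k:ℝ)+1)^2 * Real.exp (-((π^2/(2*R^2)*t) * ((k:ℝ)+1)^2)))) := by
  rw [f₃exit]
  have hR2 : (R:ℝ)^2 ≠ 0 := by positivity
  have hfac : π^2 / R^2 = 2 * (π^2/(2*R^2)) := by field_simp
  rw [hfac]
  congr 1
  refine tsum_congr fun k => ?_
  have he : Real.exp (-(((k:ℝ)+1)^2 * π^2 * t) / (2*R^2))
      = Real.exp (-((π^2/(2*R^2)*t) * ((k:ℝ)+1)^2)) := by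
    congr 1
    field_simp
  rw [he]
  ring

lemma Ht_hasDeriv {R : ℝ} (hR : 0 < R) {t : ℝ} (ht : 0 < t) :
    HasDerivAt (Ht (π^2/(2*R^2))) (f₃exit R t) t := by
  set c : ℝ := π^2/(2*R^2) with hcdef
  have hc : 0 < c := by rw [hcdef]; positivity
  have hct : 0 < c * t := by positivity
  have hinner : HasDerivAt (fun y : ℝ => c * y) c t := by
    simpa using (hasDerivAt_id t).const_mul c
  have hcomp := (theta_hasDeriv hct).comp t hinner
  have hG : HasDerivAt (fun y => 1 - 2 * θs (c*y))
      (-(2 * ((∑' k : ℕ, ((-1:ℝ)^k * (Real.exp (-(c*t * ((k:ℝ)+1)^2)) * (-(((k:ℝ)+1)^2))))) * c))) t := by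
    simpa using ((hcomp.const_mul 2).const_sub 1)
  have hval : -(2 * ((∑' k : ℕ, ((-1:ℝ)^k * (Real.exp (-(c*t * ((k:ℝ)+1)^2)) * (-(((k:ℝ)+1)^2))))) * c))
      = f₃exit R t := by
    rw [f_eq hR t]
    rw [← hcdef]
    rw [show (∑' k : ℕ, ((-1:ℝ)^k * (Real.exp (-(c*t * ((k:ℝ)+1)^2)) * (-(((k:ℝ)+1)^2)))))
        = -(∑' k : ℕ, ((-1:ℝ)^k * (((k:ℝ)+1)^2 * Real.exp (-((c*t) * ((k:ℝ)+1)^2))))) from by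
      rw [← tsum_neg]
      refine tsum_congr fun k => ?_
      ring]
    ring
  rw [hval] at hG
  refine hG.congr_of_eventuallyEq ?_
  have hmem : Ioi (0:ℝ) ∈ 𝓝 t := isOpen_Ioi.mem_nhds ht
  filter_upwards [hmem] with y hy
  exact Ht_id hc hy

lemma Ht_mono {c t₁ t₂ : ℝ} (hc : 0 < c) (h1 : 0 < t₁) (h12 : t₁ ≤ t₂)
    (h2 : t₂ ≤ π^2/(2*c)) : Ht c t₁ ≤ Ht c t₂ := by
  rw [Ht, Ht]
  have h2pos : 0 < t₂ := lt_of_lt_of_le h1 h12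
  refine mul_le_mul_of_nonneg_left ?_ (by positivity)
  have hterm : ∀ k : ℕ,
      Real.sqrt t₁⁻¹ * Real.exp (-(π^2*(2*(k:ℝ)+1)^2/(4*c)) / t₁)
        ≤ Real.sqrt t₂⁻¹ * Real.exp (-(π^2*(2*(k:ℝ)+1)^2/(4*c)) / t₂) := by
    intro k
    have hBk : t₂ ≤ 2 * (π^2*(2*(k:ℝ)+1)^2/(4*c)) := by
      have hk1 : (1:ℝ) ≤ (2*(k:ℝ)+1)^2 := by nlinarith [Nat.cast_nonneg (α := ℝ) k]
      have : π^2/(2*c) ≤ 2 * (π^2*(2*(k:ℝ)+1)^2/(4*c)) := by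
        rw [show 2 * (π^2*(2*(k:ℝ)+1)^2/(4*c)) = π^2*(2*(k:ℝ)+1)^2/(2*c) by ring]
        apply div_le_div_of_nonneg_right ?_ (by positivity)
        nlinarith [sq_nonneg π]
      linarith
    have := sqrt_inv_exp_mono (B := π^2*(2*(k:ℝ)+1)^2/(4*c)) h1 h12 hBk
    simpa [neg_div] using this
  exact Summable.tsum_le_tsum hterm (S_Hterm hc h1) (S_Hterm hc h2pos)

lemma f_nonneg {R : ℝ} (hR : 0 < R) {t : ℝ} (ht : 0 < t) : 0 ≤ f₃exit R t := by
  set c : ℝ := π^2/(2*R^2) with hcdef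
  have hc : 0 < c := by rw [hcdef]; positivity
  have hct : 0 < c * t := by positivity
  rcases le_or_gt 1 (c*t) with hbig | hsmall
  · -- alternating series argument
    rw [f_eq hR t, ← hcdef]
    have h0 : 0 ≤ ∑' k : ℕ, ((-1:ℝ)^k * (((k:ℝ)+1)^2 * Real.exp (-((c*t) * ((k:ℝ)+1)^2)))) := by
      refine alt_nonneg ?_ (fun k => by positivity) (fun k => ?_)
      · exact (S_sq hct).congr fun k => rfl
      · have := sq_term_dec hbig k
        push_cast
        convert this using 3 <;> push_cast <;> ring
    positivity
  · -- slope argument using monotonicity of Ht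
    have htlt : t < π^2/(2*c) := by
      rw [lt_div_iff₀ (by positivity)]
      calc t * (2*c) = 2*(c*t) := by ring
        _ < 2 := by linarith
        _ ≤ π^2 := by nlinarith [Real.pi_gt_three]
    have hd := Ht_hasDeriv hR ht
    rw [← hcdef] at hd
    rw [hasDerivAt_iff_tendsto_slope] at hd
    have hsub : 𝓝[>] t ≤ 𝓝[≠] t :=
      nhdsWithin_mono t fun y hy => ne_of_gt hy
    have hd' := hd.mono_left hsub
    refine ge_of_tendsto hd' ?_
    have hmem : Ioo t (π^2/(2*c)) ∈ 𝓝[>] t :=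
      Ioo_mem_nhdsGT_of_mem ⟨le_rfl, htlt⟩
    filter_upwards [hmem] with y hy
    have hyt : t < y := hy.1
    have hmono := Ht_mono hc ht hyt.le hy.2.le
    rw [slope_def_field]
    have : 0 ≤ Ht c y - Ht c t := by linarith
    apply div_nonneg this
    linarith


lemma Ht_top {c : ℝ} (hc : 0 < c) : Tendsto (Ht c) atTop (𝓝 1) := by
  have hexp : Tendsto (fun t : ℝ => Real.exp (-(c*t))) atTop (𝓝 0) :=
    Real.tendsto_exp_neg_atTop_nhds_zero.comp (Tendsto.const_mul_atTop hc tendsto_id)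
  have hθ : Tendsto (fun t => θs (c*t)) atTop (𝓝 0) := by
    refine squeeze_zero' ?_ ?_ hexp
    · filter_upwards [Ioi_mem_atTop (0:ℝ)] with t ht
      exact theta_nonneg (mul_pos hc ht)
    · filter_upwards [Ioi_mem_atTop (0:ℝ)] with t ht
      exact theta_le (mul_pos hc ht)
  have h1 : Tendsto (fun t => 1 - 2 * θs (c*t)) atTop (𝓝 1) := by
    have := tendsto_const_nhds (x := (1:ℝ)) (f := atTop).sub ((hθ.const_mul 2))
    simpa using this
  refine Tendsto.congr' ?_ h1
  filter_upwards [Ioi_mem_atTop (0:ℝ)] with t ht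
  exact (Ht_id hc ht).symm

lemma aux_sqrt_exp_atTop {d : ℝ} (hd : 0 < d) :
    Tendsto (fun u : ℝ => Real.sqrt u * Real.exp (-(d*u))) atTop (𝓝 0) := by
  have h1 : Tendsto (fun v : ℝ => v * Real.exp (-v)) atTop (𝓝 0) := by
    simpa using tendsto_pow_mul_exp_neg_atTop_nhds_zero 1
  have h2 : Tendsto (fun u : ℝ => d*u) atTop atTop := Tendsto.const_mul_atTop hd tendsto_id
  have h3 := h1.comp h2
  have h4 : Tendsto (fun u : ℝ => u * Real.exp (-(d*u))) atTop (𝓝 0) := by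
    have h5 := h3.const_mul d⁻¹
    rw [mul_zero] at h5
    refine h5.congr fun u => ?_
    simp only [Function.comp]
    field_simp
  refine squeeze_zero' ?_ ?_ h4
  · filter_upwards [eventually_ge_atTop (0:ℝ)] with u hu
    positivity
  · filter_upwards [eventually_ge_atTop (1:ℝ)] with u hu
    have hsq : Real.sqrt u ≤ u := by
      have h6 : Real.sqrt u ≤ Real.sqrt (u^2) := Real.sqrt_le_sqrt (by nlinarith)
      rwa [Real.sqrt_sq (by linarith)] at h6
    exact mul_le_mul_of_nonneg_right hsq (Real.exp_nonneg _)

lemma Ht_cont0 {c : ℝ} (hc : 0 < c) : ContinuousWithinAt (Ht c) (Ici 0) 0 := by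
  have hd : 0 < π^2/(4*c) := by positivity
  set d : ℝ := π^2/(4*c) with hddef
  rw [ContinuousWithinAt, Ht_zero]
  have hbnd : Tendsto (fun x : ℝ => 4 * Real.sqrt (π/c) * (Real.sqrt x⁻¹ * Real.exp (-(d/x))))
      (𝓝[Ici 0] 0) (𝓝 0) := by
    have hcore : Tendsto (fun x : ℝ => Real.sqrt x⁻¹ * Real.exp (-(d/x))) (𝓝[Ici 0] 0) (𝓝 0) := by
      rw [show (Ici (0:ℝ)) = insert 0 (Ioi 0) from (Set.Ioi_insert (a := (0:ℝ))).symm, nhdsWithin_insert]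
      rw [tendsto_sup]
      constructor
      · have h0 : Real.sqrt (0:ℝ)⁻¹ * Real.exp (-(d/(0:ℝ))) = 0 := by norm_num
        refine (tendsto_pure_pure _ _).mono_right ?_
        rw [h0]
        exact pure_le_nhds 0
      · have hU := aux_sqrt_exp_atTop hd
        have hinv : Tendsto (fun x : ℝ => x⁻¹) (𝓝[>] (0:ℝ)) atTop := tendsto_inv_nhdsGT_zero
        have := hU.comp hinv
        refine this.congr fun x => ?_
        simp only [Function.comp]
        rw [div_eq_mul_inv]
    have := hcore.const_mul (4 * Real.sqrt (π/c))
    simpa using this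
  refine squeeze_zero' ?_ ?_ hbnd
  · filter_upwards [self_mem_nhdsWithin] with x hx
    rw [Ht]
    refine mul_nonneg (by positivity) (tsum_nonneg fun k => by positivity)
  · filter_upwards [Icc_mem_nhdsGE_of_mem (⟨le_rfl, hd⟩ : (0:ℝ) ∈ Ico 0 d)] with x hx
    rcases eq_or_lt_of_le hx.1 with h0 | hxpos
    · rw [← h0, Ht_zero]
      norm_num
    · -- 0 < x ≤ d
      have hxd : x ≤ d := hx.2
      set q : ℝ := Real.exp (-(d/x)) with hqdef
      have hq0 : 0 < q := Real.exp_pos _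
      have hq2 : q ≤ 1/2 := by
        have h1 : (1:ℝ) ≤ d/x := (one_le_div hxpos).mpr hxd
        have h2 : q ≤ Real.exp (-1) := Real.exp_le_exp.mpr (by linarith)
        have h3 : Real.exp (-1) ≤ 1/2 := by
          rw [Real.exp_neg]
          rw [inv_le_comm₀ (Real.exp_pos _) (by norm_num)]
          have := Real.add_one_le_exp (1:ℝ)
          norm_num
          linarith
        linarith
      have hq1 : q < 1 := by linarith
      have hterm : ∀ k : ℕ,
          Real.sqrt x⁻¹ * Real.exp (-(π^2*(2*(k:ℝ)+1)^2/(4*c)) / x) ≤ Real.sqrt x⁻¹ * q^(k+1) := by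
        intro k
        refine mul_le_mul_of_nonneg_left ?_ (Real.sqrt_nonneg _)
        have hqpow : q^(k+1) = Real.exp (((k:ℝ)+1) * (-(d/x))) := by
          rw [hqdef, ← Real.exp_nat_mul]
          push_cast
          try ring_nf
        rw [hqpow]
        apply Real.exp_le_exp.mpr
        have hdx : 0 < d/x := div_pos hd hxpos
        have hke : -(π^2*(2*(k:ℝ)+1)^2/(4*c)) / x = -((d/x) * (2*(k:ℝ)+1)^2) := by
          rw [hddef]
          field_simp
          try ring
        rw [hke]
        have hk1 : ((k:ℝ)+1) ≤ (2*(k:ℝ)+1)^2 := by nlinarith [Nat.cast_nonneg (α := ℝ) k]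
        have hdx2 := mul_le_mul_of_nonneg_left hk1 hdx.le
        nlinarith
      have hsum_geo : Summable fun k : ℕ => Real.sqrt x⁻¹ * q^(k+1) := by
        refine Summable.mul_left _ ?_
        have := (summable_geometric_of_lt_one hq0.le hq1).comp_injective (add_left_injective 1)
        exact this.congr fun k => by simp [Function.comp]
      have hgeo_val : ∑' k : ℕ, q^(k+1) = q * (1-q)⁻¹ := by
        have h7 : ∀ k : ℕ, q^(k+1) = q * q^k := fun k => by rw [pow_succ]; ring
        rw [tsum_congr h7, tsum_mul_left, tsum_geometric_of_lt_one hq0.le hq1]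
      have hHt : Ht c x ≤ 2 * Real.sqrt (π/c) * (Real.sqrt x⁻¹ * (q * (1-q)⁻¹)) := by
        rw [Ht]
        refine mul_le_mul_of_nonneg_left ?_ (by positivity)
        calc ∑' k : ℕ, (Real.sqrt x⁻¹ * Real.exp (-(π^2*(2*(k:ℝ)+1)^2/(4*c)) / x))
            ≤ ∑' k : ℕ, (Real.sqrt x⁻¹ * q^(k+1)) :=
              Summable.tsum_le_tsum hterm (S_Hterm hc hxpos) hsum_geo
          _ = Real.sqrt x⁻¹ * (q * (1-q)⁻¹) := by rw [tsum_mul_left, hgeo_val]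
      have hfin : 2 * Real.sqrt (π/c) * (Real.sqrt x⁻¹ * (q * (1-q)⁻¹))
          ≤ 4 * Real.sqrt (π/c) * (Real.sqrt x⁻¹ * q) := by
        have hinvle : (1-q)⁻¹ ≤ 2 := by
          rw [inv_le_comm₀ (by linarith) (by norm_num)]
          linarith
        have h8 : q * (1-q)⁻¹ ≤ q * 2 := mul_le_mul_of_nonneg_left hinvle hq0.le
        have h9 : Real.sqrt x⁻¹ * (q * (1-q)⁻¹) ≤ Real.sqrt x⁻¹ * (q * 2) :=
          mul_le_mul_of_nonneg_left h8 (Real.sqrt_nonneg _)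
        calc 2 * Real.sqrt (π/c) * (Real.sqrt x⁻¹ * (q * (1-q)⁻¹))
            ≤ 2 * Real.sqrt (π/c) * (Real.sqrt x⁻¹ * (q * 2)) :=
              mul_le_mul_of_nonneg_left h9 (by positivity)
          _ = 4 * Real.sqrt (π/c) * (Real.sqrt x⁻¹ * q) := by ring
      exact hHt.trans hfin

end F3exitAux

/-- The exit-time density of the 3-ball integrates to one:
`∫_0^∞ f₃^exit(t) dt = 1`. -/
theorem f₃exit_integral_eq_one (R : ℝ) (hR : 0 < R) :
    ∫ t in Set.Ioi (0 : ℝ), f₃exit R t = 1 := by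
  have hc : 0 < π^2/(2*R^2) := by positivity
  have h := integral_Ioi_of_hasDerivAt_of_nonneg (g := F3exitAux.Ht (π^2/(2*R^2)))
    (g' := fun t => f₃exit R t) (a := 0) (l := 1)
    (F3exitAux.Ht_cont0 hc)
    (fun x hx => F3exitAux.Ht_hasDeriv hR hx)
    (fun x hx => F3exitAux.f_nonneg hR hx)
    (F3exitAux.Ht_top hc)
  rw [h, F3exitAux.Ht_zero]
  norm_num
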